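/- Let G = C₂ ⊕ C₄ with basis (e,g), ord(e) = 2, ord(g) = 4, and let U = e·g³·(e+g), a minimal zero-sum sequence of length 5. Then the zero-sum sequence U·(−U) (where −U = e·(−g)³·(e−g)) has set of lengths L(U·(−U)) = {2, 4, 5}. In particular, {2,5} ⊆ L(A) implies L(A) ≠ [2,5] for this A, showing the interval [2,5] arises only with the gap at 3. -/

import Mathlib

/-- `S` is a minimal zero-sum sequence over `G`. -/
def IsMinZS {G : Type*} [AddCommGroup G] (S : Multiset G) : Prop :=
  S ≠ 0 ∧ S.sum = 0 ∧ ∀ T : Multiset G, T ≤ S → T ≠ 0 → T ≠ S → T.sum ≠ 0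

/-- The set of factorization lengths of `S` into atoms (minimal zero-sum sequences)
of the monoid of zero-sum sequences over `G`. -/
def ZSLengths {G : Type*} [AddCommGroup G] (S : Multiset G) : Set ℕ :=
  {n | ∃ l : Multiset (Multiset G),
    Multiset.card l = n ∧ (∀ T ∈ l, IsMinZS T) ∧ l.sum = S}

/-- The group `G = C₂ ⊕ C₄`. -/
abbrev G24 : Type := ZMod 2 × ZMod 4

/-- The basis element `e` of order 2. -/
def eG : G24 := (1, 0)

/-- The basis element `g` of order 4. -/
def gG : G24 := (0, 1)

/-- The minimal zero-sum sequence `U = e·g³·(e+g)` of length 5 over `C₂ ⊕ C₄`. -/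
def U24 : Multiset G24 := ↑[eG, gG, gG, gG, eG + gG]

namespace Stmt17Aux

instance decMinZS (S : Multiset G24) : Decidable (IsMinZS S) :=
  decidable_of_iff (S ≠ 0 ∧ S.sum = 0 ∧ ∀ T ∈ S.powerset, T ≠ 0 → T ≠ S → T.sum ≠ 0) (by
    constructor
    · rintro ⟨h1, h2, h3⟩
      exact ⟨h1, h2, fun T hT => h3 T (Multiset.mem_powerset.mpr hT)⟩
    · rintro ⟨h1, h2, h3⟩
      exact ⟨h1, h2, fun T hT => h3 T (Multiset.mem_powerset.mp hT)⟩)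

def W24 : Multiset G24 := U24 + U24.map (fun x => -x)

def mk (v : ℕ × ℕ × ℕ × ℕ × ℕ) : Multiset G24 :=
  Multiset.replicate v.1 (1,0) + Multiset.replicate v.2.1 (0,1) +
  Multiset.replicate v.2.2.1 (0,3) + Multiset.replicate v.2.2.2.1 (1,1) +
  Multiset.replicate v.2.2.2.2 (1,3)

def A1 : Multiset G24 := {(1,1),(1,3)}
def A2 : Multiset G24 := {(0,1),(0,3)}
def A3 : Multiset G24 := {(1,0),(0,3),(1,1)}
def A4 : Multiset G24 := {(1,0),(0,3),(0,3),(0,3),(1,3)}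
def A5 : Multiset G24 := {(1,0),(0,1),(1,3)}
def A6 : Multiset G24 := {(1,0),(0,1),(0,1),(0,1),(1,1)}
def A7 : Multiset G24 := {(1,0),(1,0)}
def atomL : List (Multiset G24) := [A1,A2,A3,A4,A5,A6,A7]

lemma cmk1 (v) : (mk v).count ((1:ZMod 2),(0:ZMod 4)) = v.1 := by
  simp (config := { decide := true }) [mk, Multiset.count_replicate, Prod.ext_iff]

lemma cmk2 (v) : (mk v).count ((0:ZMod 2),(1:ZMod 4)) = v.2.1 := by
  simp (config := { decide := true }) [mk, Multiset.count_replicate, Prod.ext_iff]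

lemma cmk3 (v) : (mk v).count ((0:ZMod 2),(3:ZMod 4)) = v.2.2.1 := by
  simp (config := { decide := true }) [mk, Multiset.count_replicate, Prod.ext_iff]

lemma cmk4 (v) : (mk v).count ((1:ZMod 2),(1:ZMod 4)) = v.2.2.2.1 := by
  simp (config := { decide := true }) [mk, Multiset.count_replicate, Prod.ext_iff]

lemma cmk5 (v) : (mk v).count ((1:ZMod 2),(3:ZMod 4)) = v.2.2.2.2 := by
  simp (config := { decide := true }) [mk, Multiset.count_replicate, Prod.ext_iff]

lemma mk_inj {u v} (h : mk u = mk v) : u = v := by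
  obtain ⟨i1,j1,k1,m1,n1⟩ := u; obtain ⟨i2,j2,k2,m2,n2⟩ := v
  have e1 := congrArg (Multiset.count ((1:ZMod 2),(0:ZMod 4))) h
  have e2 := congrArg (Multiset.count ((0:ZMod 2),(1:ZMod 4))) h
  have e3 := congrArg (Multiset.count ((0:ZMod 2),(3:ZMod 4))) h
  have e4 := congrArg (Multiset.count ((1:ZMod 2),(1:ZMod 4))) h
  have e5 := congrArg (Multiset.count ((1:ZMod 2),(3:ZMod 4))) h
  rw [cmk1, cmk1] at e1; rw [cmk2, cmk2] at e2; rw [cmk3, cmk3] at e3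
  rw [cmk4, cmk4] at e4; rw [cmk5, cmk5] at e5
  simp_all

lemma mk_le_mk {u v : ℕ × ℕ × ℕ × ℕ × ℕ} (h1 : u.1 ≤ v.1) (h2 : u.2.1 ≤ v.2.1)
    (h3 : u.2.2.1 ≤ v.2.2.1) (h4 : u.2.2.2.1 ≤ v.2.2.2.1) (h5 : u.2.2.2.2 ≤ v.2.2.2.2) :
    mk u ≤ mk v :=
  add_le_add (add_le_add (add_le_add (add_le_add
    ((Multiset.replicate_le_replicate _).mpr h1)
    ((Multiset.replicate_le_replicate _).mpr h2))
    ((Multiset.replicate_le_replicate _).mpr h3))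
    ((Multiset.replicate_le_replicate _).mpr h4))
    ((Multiset.replicate_le_replicate _).mpr h5)

lemma mk_ne_zero {u : ℕ × ℕ × ℕ × ℕ × ℕ} (h : u ≠ (0,0,0,0,0)) : mk u ≠ 0 := by
  obtain ⟨i,j,k,m,n⟩ := u
  intro h0
  have hc := congrArg Multiset.card h0
  simp [mk] at hc
  simp_all

lemma mem_W24 : ∀ x ∈ W24, x = ((1:ZMod 2),(0:ZMod 4)) ∨ x = (0,1) ∨ x = (0,3) ∨
    x = (1,1) ∨ x = (1,3) := by decide

lemma eq_mk {T : Multiset G24} (h : T ≤ W24) :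
    T = mk (T.count (1,0), T.count (0,1), T.count (0,3), T.count (1,1), T.count (1,3)) := by
  ext x
  have hx : x ∈ T → x = ((1:ZMod 2),(0:ZMod 4)) ∨ x = (0,1) ∨ x = (0,3) ∨
      x = (1,1) ∨ x = (1,3) := fun hx => mem_W24 x (Multiset.mem_of_le h hx)
  by_cases h1 : x = ((1:ZMod 2),(0:ZMod 4)); · rw [h1, cmk1]
  by_cases h2 : x = ((0:ZMod 2),(1:ZMod 4)); · rw [h2, cmk2]
  by_cases h3 : x = ((0:ZMod 2),(3:ZMod 4)); · rw [h3, cmk3]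
  by_cases h4 : x = ((1:ZMod 2),(1:ZMod 4)); · rw [h4, cmk4]
  by_cases h5 : x = ((1:ZMod 2),(3:ZMod 4)); · rw [h5, cmk5]
  have hxT : x ∉ T := fun hh => by rcases hx hh with h|h|h|h|h <;> simp_all
  rw [Multiset.count_eq_zero.mpr hxT]
  rw [eq_comm, Multiset.count_eq_zero]
  intro hmem
  simp only [mk, Multiset.mem_add, Multiset.mem_replicate] at hmem
  rcases hmem with ((((⟨_,h⟩|⟨_,h⟩)|⟨_,h⟩)|⟨_,h⟩)|⟨_,h⟩) <;> simp_all

def dball (n : ℕ) (P : ℕ → Prop) (H : ∀ k, Decidable (P k)) : Decidable (∀ k ≤ n, P k) :=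
  @Nat.decidableBallLE n (fun k _ => P k) (fun k _ => H k)

def InnerMin (v : ℕ × ℕ × ℕ × ℕ × ℕ) : Prop :=
  ∀ i' ≤ v.1, ∀ j' ≤ v.2.1, ∀ k' ≤ v.2.2.1, ∀ m' ≤ v.2.2.2.1, ∀ n' ≤ v.2.2.2.2,
    (i',j',k',m',n') ≠ ((0:ℕ),(0:ℕ),(0:ℕ),(0:ℕ),(0:ℕ)) →
    (i',j',k',m',n') ≠ v → (mk (i',j',k',m',n')).sum ≠ 0

instance decInnerMin : DecidablePred InnerMin := fun v =>
  dball v.1 _ fun _ => dball v.2.1 _ fun _ => dball v.2.2.1 _ fun _ =>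
    dball v.2.2.2.1 _ fun _ => dball v.2.2.2.2 _ fun _ => inferInstance

def bigProp : Prop :=
  ∀ i ≤ 2, ∀ j ≤ 3, ∀ k ≤ 3, ∀ m ≤ 1, ∀ n ≤ 1,
    ((mk (i,j,k,m,n)).sum = 0 ∧ (i,j,k,m,n) ≠ ((0:ℕ),(0:ℕ),(0:ℕ),(0:ℕ),(0:ℕ)) ∧
      InnerMin (i,j,k,m,n)) → mk (i,j,k,m,n) ∈ atomL

instance decBigProp : Decidable bigProp :=
  show Decidable (∀ i ≤ 2, _) from
  dball 2 _ fun _ => dball 3 _ fun _ => dball 3 _ fun _ =>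
    dball 1 _ fun _ => dball 1 _ fun _ => inferInstance

set_option maxRecDepth 8000 in
lemma arith_atoms : bigProp := by decide

lemma atom_class {T : Multiset G24} (hle : T ≤ W24) (hmin : IsMinZS T) : T ∈ atomL := by
  have hT := eq_mk hle
  have hi : T.count ((1:ZMod 2),(0:ZMod 4)) ≤ 2 :=
    le_trans (Multiset.count_le_of_le _ hle) (by decide)
  have hj : T.count ((0:ZMod 2),(1:ZMod 4)) ≤ 3 :=
    le_trans (Multiset.count_le_of_le _ hle) (by decide)
  have hk : T.count ((0:ZMod 2),(3:ZMod 4)) ≤ 3 :=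
    le_trans (Multiset.count_le_of_le _ hle) (by decide)
  have hm : T.count ((1:ZMod 2),(1:ZMod 4)) ≤ 1 :=
    le_trans (Multiset.count_le_of_le _ hle) (by decide)
  have hn : T.count ((1:ZMod 2),(3:ZMod 4)) ≤ 1 :=
    le_trans (Multiset.count_le_of_le _ hle) (by decide)
  rw [hT]
  apply arith_atoms _ hi _ hj _ hk _ hm _ hn
  refine ⟨by rw [← hT]; exact hmin.2.1, ?_, ?_⟩
  · intro h0
    apply hmin.1
    rw [hT, h0]
    simp [mk]
  · intro i' hi' j' hj' k' hk' m' hm' n' hn' hne0 hnev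
    refine hmin.2.2 (mk (i',j',k',m',n')) ?_ (mk_ne_zero hne0) ?_
    · rw [hT]; exact mk_le_mk hi' hj' hk' hm' hn'
    · intro he
      exact hnev (mk_inj (he.trans hT))

lemma atom_card : ∀ X ∈ atomL, 2 ≤ Multiset.card X := by decide

lemma two_mul_card_le (l : Multiset (Multiset G24)) (h : ∀ T ∈ l, T ∈ atomL) :
    2 * Multiset.card l ≤ Multiset.card l.sum := by
  induction l using Multiset.induction with
  | empty => simp
  | cons T s ih =>
    rw [Multiset.sum_cons, Multiset.card_cons, Multiset.card_add]
    have h1 : 2 ≤ Multiset.card T := atom_card T (h T (Multiset.mem_cons_self _ _))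
    have h2 := ih (fun X hX => h X (Multiset.mem_cons_of_mem hX))
    omega

lemma no3 : ∀ x ∈ atomL, ∀ y ∈ atomL, ∀ z ∈ atomL, x + (y + z) ≠ W24 := by decide

end Stmt17Aux

open Stmt17Aux in
/-- Over `G = C₂ ⊕ C₄` with `U = e·g³·(e+g)`, the zero-sum sequence `U·(−U)` has set of
lengths `L(U·(−U)) = {2, 4, 5}`. -/
theorem stmt17 : ZSLengths (U24 + U24.map (fun x => -x)) = {2, 4, 5} := by
  have hW : U24 + U24.map (fun x => -x) = W24 := rfl
  rw [hW]
  ext n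
  simp only [ZSLengths, Set.mem_setOf_eq, Set.mem_insert_iff, Set.mem_singleton_iff]
  constructor
  · rintro ⟨l, hcard, hat, hsum⟩
    have hmemA : ∀ T ∈ l, T ∈ atomL := fun T hT =>
      atom_class (hsum ▸ Multiset.single_le_sum (fun x _ => zero_le) T hT) (hat T hT)
    have hcards : 2 * n ≤ 10 := by
      have := two_mul_card_le l hmemA
      rw [hsum, hcard] at this
      exact le_trans this (by decide)
    have hn5 : n ≤ 5 := by omega
    interval_cases n
    · obtain rfl := Multiset.card_eq_zero.mp hcard
      exact absurd hsum (by decide)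
    · obtain ⟨T, rfl⟩ := Multiset.card_eq_one.mp hcard
      rw [Multiset.sum_singleton] at hsum
      have := hmemA T (Multiset.mem_singleton_self T)
      rw [hsum] at this
      exact absurd this (by decide)
    · tauto
    · obtain ⟨x, y, z, rfl⟩ := Multiset.card_eq_three.mp hcard
      have hx := hmemA x (by simp)
      have hy := hmemA y (by simp)
      have hz := hmemA z (by simp)
      rw [show ({x, y, z} : Multiset (Multiset G24)).sum = x + (y + z) by
        simp [Multiset.sum_cons]] at hsum
      exact absurd hsum (no3 x hx y hy z hz)
    · tauto
    · tauto
  · rintro (rfl | rfl | rfl)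
    · exact ⟨↑[A6, A4], by decide, by decide, by decide⟩
    · exact ⟨↑[A2, A2, A5, A3], by decide, by decide, by decide⟩
    · exact ⟨↑[A2, A2, A2, A7, A1], by decide, by decide, by decide⟩
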